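/- Let B_0, B_1, …, B_n (n ≥ 1) be random vectors forming a path in a Bayes linear tree, i.e. Cov_{B_k}(B_0, B_{k+1}) = 0 for every k with 1 ≤ k ≤ n−1, where each subscripted operator uses the Moore–Penrose inverse of the corresponding variance matrix. Then the belief transform propagates along the path: T_{B_0}(B_n) = [P_{B_{n−1}}(B_n)·…·P_{B_1}(B_2)]·T_{B_0}(B_1)·[P_{B_2}(B_1)·…·P_{B_n}(B_{n−1})]. -/

import Mathlib

open MeasureTheory Matrix

variable {Ω : Type*}

/-- The covariance matrix of two random vectors `B` (dimension `m`) and `D` (dimension `n`):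
the `(i,j)` entry is `E[Bᵢ·Dⱼ] − E[Bᵢ]·E[Dⱼ]`. -/
noncomputable def cov [MeasurableSpace Ω] (μ : Measure Ω) {m n : ℕ}
    (B : Fin m → Ω → ℝ) (D : Fin n → Ω → ℝ) : Matrix (Fin m) (Fin n) ℝ :=
  Matrix.of fun i j =>
    (∫ ω, B i ω * D j ω ∂μ) - (∫ ω, B i ω ∂μ) * (∫ ω, D j ω ∂μ)

/-- `W` is a Moore–Penrose inverse of `V`. -/
def IsMoorePenrose {m n : ℕ} (V : Matrix (Fin m) (Fin n) ℝ)
    (W : Matrix (Fin n) (Fin m) ℝ) : Prop :=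
  V * W * V = V ∧ W * V * W = W ∧ (V * W)ᵀ = V * W ∧ (W * V)ᵀ = W * V

/-- The adjusted expectation `E_D(B)` (computed with the matrix `W`, intended to be the
Moore–Penrose inverse of `Var(D)`): the `i`-th component is
`E[Bᵢ] + Σ_j (Cov(B,D)·W)_{ij}·(Dⱼ − E[Dⱼ])`. -/
noncomputable def adjExp [MeasurableSpace Ω] (μ : Measure Ω) {m n : ℕ}
    (B : Fin m → Ω → ℝ) (D : Fin n → Ω → ℝ)
    (W : Matrix (Fin n) (Fin n) ℝ) : Fin m → Ω → ℝ :=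
  fun i ω => (∫ ω', B i ω' ∂μ) + ∑ j, (cov μ B D * W) i j * (D j ω - ∫ ω', D j ω' ∂μ)

/-- The adjusted covariance `Cov_D(B,C) = Cov(B − E_D(B), C − E_D(C))`. -/
noncomputable def adjCov [MeasurableSpace Ω] (μ : Measure Ω) {m p n : ℕ}
    (B : Fin m → Ω → ℝ) (C : Fin p → Ω → ℝ) (D : Fin n → Ω → ℝ)
    (W : Matrix (Fin n) (Fin n) ℝ) : Matrix (Fin m) (Fin p) ℝ :=
  cov μ (fun i ω => B i ω - adjExp μ B D W i ω) (fun j ω => C j ω - adjExp μ C D W j ω)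

/-- The composite projection `P_{B_{n−1}}(B_n)·…·P_{B_1}(B_2)` along the path
`B_1, …, B_n` (equal to the identity for `n = 1`; junk value `0` for `n = 0`). -/
noncomputable def fwdChain [MeasurableSpace Ω] (μ : Measure Ω) {d : ℕ → ℕ}
    (B : (k : ℕ) → Fin (d k) → Ω → ℝ)
    (W : (k : ℕ) → Matrix (Fin (d k)) (Fin (d k)) ℝ) :
    (n : ℕ) → Matrix (Fin (d n)) (Fin (d 1)) ℝ
  | 0 => 0
  | 1 => 1
  | n + 2 => (cov μ (B (n + 2)) (B (n + 1)) * W (n + 1)) * fwdChain μ B W (n + 1)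

/-- The composite projection `P_{B_2}(B_1)·…·P_{B_n}(B_{n−1})` along the path
`B_1, …, B_n` (equal to the identity for `n = 1`; junk value `0` for `n = 0`). -/
noncomputable def revChain [MeasurableSpace Ω] (μ : Measure Ω) {d : ℕ → ℕ}
    (B : (k : ℕ) → Fin (d k) → Ω → ℝ)
    (W : (k : ℕ) → Matrix (Fin (d k)) (Fin (d k)) ℝ) :
    (n : ℕ) → Matrix (Fin (d 1)) (Fin (d n)) ℝ
  | 0 => 0
  | 1 => 1
  | n + 2 => revChain μ B W (n + 1) * (cov μ (B (n + 1)) (B (n + 2)) * W (n + 2))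

section helpers
variable [MeasurableSpace Ω] {μ : Measure Ω}

lemma int_mul2 {f g : Ω → ℝ} (hf : MemLp f 2 μ) (hg : MemLp g 2 μ) :
    Integrable (fun ω => f ω * g ω) μ := by
  have h : MemLp (f • g) 1 μ := hg.smul hf
  rw [memLp_one_iff_integrable] at h
  exact h

lemma mem2_sum {ι : Type*} (s : Finset ι) (f : ι → Ω → ℝ) (h : ∀ i ∈ s, MemLp (f i) 2 μ) :
    MemLp (fun ω => ∑ i ∈ s, f i ω) 2 μ := by
  have := memLp_finset_sum' s h
  rwa [show (∑ i ∈ s, f i) = fun ω => ∑ i ∈ s, f i ω from funext fun ω => by simp] at this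

lemma cov_apply {m n : ℕ} (B : Fin m → Ω → ℝ) (D : Fin n → Ω → ℝ) (i j) :
    cov μ B D i j = (∫ ω, B i ω * D j ω ∂μ) - (∫ ω, B i ω ∂μ) * (∫ ω, D j ω ∂μ) := rfl

lemma cov_transpose {m n : ℕ} (B : Fin m → Ω → ℝ) (D : Fin n → Ω → ℝ) :
    (cov μ B D)ᵀ = cov μ D B := by
  ext i j; simp [cov_apply, transpose_apply, mul_comm]

variable [IsProbabilityMeasure μ]

lemma cov_sub_left {m p : ℕ} {F G : Fin m → Ω → ℝ} {H : Fin p → Ω → ℝ}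
    (hF : ∀ i, MemLp (F i) 2 μ) (hG : ∀ i, MemLp (G i) 2 μ) (hH : ∀ j, MemLp (H j) 2 μ) :
    cov μ (fun i ω => F i ω - G i ω) H = cov μ F H - cov μ G H := by
  ext i j
  have h1 : (fun ω => (F i ω - G i ω) * H j ω)
      = fun ω => F i ω * H j ω - G i ω * H j ω := by funext ω; ring
  simp only [cov_apply, Matrix.sub_apply, h1,
    integral_sub (int_mul2 (hF i) (hH j)) (int_mul2 (hG i) (hH j)),
    integral_sub ((hF i).integrable one_le_two) ((hG i).integrable one_le_two)]
  ring

lemma cov_sub_right {m p : ℕ} {F : Fin m → Ω → ℝ} {G H : Fin p → Ω → ℝ}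
    (hF : ∀ i, MemLp (F i) 2 μ) (hG : ∀ j, MemLp (G j) 2 μ) (hH : ∀ j, MemLp (H j) 2 μ) :
    cov μ F (fun j ω => G j ω - H j ω) = cov μ F G - cov μ F H := by
  ext i j
  have h1 : (fun ω => F i ω * (G j ω - H j ω))
      = fun ω => F i ω * G j ω - F i ω * H j ω := by funext ω; ring
  simp only [cov_apply, Matrix.sub_apply, h1,
    integral_sub (int_mul2 (hF i) (hG j)) (int_mul2 (hF i) (hH j)),
    integral_sub ((hG j).integrable one_le_two) ((hH j).integrable one_le_two)]
  ring

lemma cov_const_sub_left {m p : ℕ} {F : Fin m → Ω → ℝ} {H : Fin p → Ω → ℝ} (c : Fin m → ℝ)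
    (hF : ∀ i, MemLp (F i) 2 μ) (hH : ∀ j, MemLp (H j) 2 μ) :
    cov μ (fun i ω => F i ω - c i) H = cov μ F H := by
  ext i j
  have h1 : (fun ω => (F i ω - c i) * H j ω)
      = fun ω => F i ω * H j ω - c i * H j ω := by funext ω; ring
  simp only [cov_apply, h1,
    integral_sub (int_mul2 (hF i) (hH j)) (((hH j).integrable one_le_two).const_mul (c i)),
    integral_sub ((hF i).integrable one_le_two) (integrable_const (c i)),
    integral_const_mul, integral_const, measure_univ, probReal_univ, ENNReal.toReal_one, smul_eq_mul, one_mul]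
  ring

lemma cov_const_sub_right {m p : ℕ} {F : Fin m → Ω → ℝ} {H : Fin p → Ω → ℝ} (c : Fin p → ℝ)
    (hF : ∀ i, MemLp (F i) 2 μ) (hH : ∀ j, MemLp (H j) 2 μ) :
    cov μ F (fun j ω => H j ω - c j) = cov μ F H := by
  ext i j
  have h1 : (fun ω => F i ω * (H j ω - c j))
      = fun ω => F i ω * H j ω - F i ω * c j := by funext ω; ring
  simp only [cov_apply, h1,
    integral_sub (int_mul2 (hF i) (hH j)) (((hF i).integrable one_le_two).mul_const (c j)),
    integral_sub ((hH j).integrable one_le_two) (integrable_const (c j)),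
    integral_mul_const, integral_const, measure_univ, probReal_univ, ENNReal.toReal_one, smul_eq_mul, one_mul]
  ring

lemma cov_matmul_left {m p q : ℕ} (M : Matrix (Fin m) (Fin q) ℝ) {F : Fin q → Ω → ℝ}
    {H : Fin p → Ω → ℝ} (hF : ∀ i, MemLp (F i) 2 μ) (hH : ∀ j, MemLp (H j) 2 μ) :
    cov μ (fun i ω => ∑ k, M i k * F k ω) H = M * cov μ F H := by
  ext i j
  have h1 : (fun ω => (∑ k, M i k * F k ω) * H j ω)
      = fun ω => ∑ k, M i k * (F k ω * H j ω) := by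
    funext ω; rw [Finset.sum_mul]; exact Finset.sum_congr rfl fun k _ => by ring
  rw [cov_apply, Matrix.mul_apply, h1,
    integral_finset_sum _ (fun k _ => (int_mul2 (hF k) (hH j)).const_mul (M i k)),
    integral_finset_sum _ (fun k _ => ((hF k).integrable one_le_two).const_mul (M i k))]
  simp only [integral_const_mul, cov_apply, Finset.sum_mul]
  rw [← Finset.sum_sub_distrib]
  exact Finset.sum_congr rfl fun k _ => by ring

lemma cov_matmul_right {m p q : ℕ} (N : Matrix (Fin p) (Fin q) ℝ) {F : Fin m → Ω → ℝ}
    {G : Fin q → Ω → ℝ} (hF : ∀ i, MemLp (F i) 2 μ) (hG : ∀ j, MemLp (G j) 2 μ) :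
    cov μ F (fun j ω => ∑ l, N j l * G l ω) = cov μ F G * Nᵀ := by
  ext i j
  have h1 : (fun ω => F i ω * ∑ l, N j l * G l ω)
      = fun ω => ∑ l, N j l * (F i ω * G l ω) := by
    funext ω; rw [Finset.mul_sum]; exact Finset.sum_congr rfl fun l _ => by ring
  rw [cov_apply, Matrix.mul_apply, h1,
    integral_finset_sum _ (fun l _ => (int_mul2 (hF i) (hG l)).const_mul (N j l)),
    integral_finset_sum _ (fun l _ => ((hG l).integrable one_le_two).const_mul (N j l))]
  simp only [integral_const_mul, cov_apply, Finset.mul_sum, transpose_apply]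
  rw [← Finset.sum_sub_distrib]
  exact Finset.sum_congr rfl fun l _ => by ring

end helpers

lemma mp_unique {n : ℕ} {V W1 W2 : Matrix (Fin n) (Fin n) ℝ}
    (h1 : IsMoorePenrose V W1) (h2 : IsMoorePenrose V W2) : W1 = W2 := by
  obtain ⟨a1, b1, c1, d1⟩ := h1
  obtain ⟨a2, b2, c2, d2⟩ := h2
  have e1 : V * W1 = V * W2 := by
    calc V * W1 = (V * W1)ᵀ := c1.symm
    _ = W1ᵀ * Vᵀ := by rw [transpose_mul]
    _ = W1ᵀ * (V * W2 * V)ᵀ := by rw [a2]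
    _ = W1ᵀ * (Vᵀ * (V * W2)ᵀ) := by rw [transpose_mul]
    _ = (W1ᵀ * Vᵀ) * (V * W2) := by rw [c2, Matrix.mul_assoc]
    _ = (V * W1)ᵀ * (V * W2) := by rw [transpose_mul]
    _ = V * W1 * V * W2 := by rw [c1]; simp only [Matrix.mul_assoc]
    _ = V * W2 := by rw [a1]
  have e2 : W1 * V = W2 * V := by
    calc W1 * V = (W1 * V)ᵀ := d1.symm
    _ = Vᵀ * W1ᵀ := by rw [transpose_mul]
    _ = (V * W2 * V)ᵀ * W1ᵀ := by rw [a2]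
    _ = ((W2 * V)ᵀ * Vᵀ) * W1ᵀ := by simp only [transpose_mul, Matrix.mul_assoc]
    _ = (W2 * V) * (Vᵀ * W1ᵀ) := by rw [d2, Matrix.mul_assoc]
    _ = (W2 * V) * (W1 * V) := by rw [← transpose_mul, d1]
    _ = W2 * (V * W1 * V) := by simp only [Matrix.mul_assoc]
    _ = W2 * V := by rw [a1]
  calc W1 = W1 * V * W1 := b1.symm
  _ = W2 * V * W1 := by rw [e2]
  _ = W2 * (V * W1) := by rw [Matrix.mul_assoc]
  _ = W2 * (V * W2) := by rw [e1]
  _ = W2 := by rw [← Matrix.mul_assoc, b2]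

lemma mp_symm {n : ℕ} {V W : Matrix (Fin n) (Fin n) ℝ} (hV : Vᵀ = V)
    (h : IsMoorePenrose V W) : Wᵀ = W := by
  refine mp_unique ?_ h
  obtain ⟨a, b, c, d⟩ := h
  refine ⟨?_, ?_, ?_, ?_⟩
  · have := congrArg transpose a
    simpa [transpose_mul, hV, Matrix.mul_assoc] using this
  · have := congrArg transpose b
    simpa [transpose_mul, hV, Matrix.mul_assoc] using this
  · have h1 : V * Wᵀ = W * V := by rw [← d, transpose_mul, hV]
    rw [h1]; exact d
  · have h1 : Wᵀ * V = V * W := by rw [← c, transpose_mul, hV]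
    rw [h1]; exact c

section adjcov
variable [MeasurableSpace Ω] (μ : Measure Ω) [IsProbabilityMeasure μ]

lemma adjCov_eq {m p n : ℕ}
    (B : Fin m → Ω → ℝ) (C : Fin p → Ω → ℝ) (D : Fin n → Ω → ℝ)
    (hB : ∀ i, MemLp (B i) 2 μ) (hC : ∀ j, MemLp (C j) 2 μ) (hD : ∀ k, MemLp (D k) 2 μ)
    (W : Matrix (Fin n) (Fin n) ℝ) (hW : IsMoorePenrose (cov μ D D) W) :
    adjCov μ B C D W = cov μ B C - cov μ B D * W * cov μ D C := by
  have hWs : Wᵀ = W := mp_symm (cov_transpose D D) hW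
  have hMD : ∀ i, MemLp (fun ω => ∑ k, (cov μ B D * W) i k * D k ω) 2 μ :=
    fun i => mem2_sum _ _ fun k _ => (hD k).const_mul _
  have hND : ∀ j, MemLp (fun ω => ∑ l, (cov μ C D * W) j l * D l ω) 2 μ :=
    fun j => mem2_sum _ _ fun l _ => (hD l).const_mul _
  have hBMD : ∀ i, MemLp (fun ω => B i ω - ∑ k, (cov μ B D * W) i k * D k ω) 2 μ :=
    fun i => (hB i).sub (hMD i)
  have hCND : ∀ j, MemLp (fun ω => C j ω - ∑ l, (cov μ C D * W) j l * D l ω) 2 μ :=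
    fun j => (hC j).sub (hND j)
  have hfB : (fun i ω => B i ω - adjExp μ B D W i ω)
      = fun i ω => (B i ω - ∑ k, (cov μ B D * W) i k * D k ω)
          - ((∫ ω', B i ω' ∂μ) - ∑ k, (cov μ B D * W) i k * ∫ ω', D k ω' ∂μ) := by
    funext i ω
    simp only [adjExp, mul_sub, Finset.sum_sub_distrib]
    ring
  have hfC : (fun j ω => C j ω - adjExp μ C D W j ω)
      = fun j ω => (C j ω - ∑ l, (cov μ C D * W) j l * D l ω)
          - ((∫ ω', C j ω' ∂μ) - ∑ l, (cov μ C D * W) j l * ∫ ω', D l ω' ∂μ) := by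
    funext j ω
    simp only [adjExp, mul_sub, Finset.sum_sub_distrib]
    ring
  have e1 := cov_const_sub_left (μ := μ)
    (F := fun i ω => B i ω - ∑ k, (cov μ B D * W) i k * D k ω)
    (H := fun j ω => (C j ω - ∑ l, (cov μ C D * W) j l * D l ω)
      - ((∫ ω', C j ω' ∂μ) - ∑ l, (cov μ C D * W) j l * ∫ ω', D l ω' ∂μ))
    (fun i => (∫ ω', B i ω' ∂μ) - ∑ k, (cov μ B D * W) i k * ∫ ω', D k ω' ∂μ)
    hBMD (fun j => (hCND j).sub (memLp_const _))
  have e2 := cov_const_sub_right (μ := μ)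
    (F := fun i ω => B i ω - ∑ k, (cov μ B D * W) i k * D k ω)
    (H := fun j ω => C j ω - ∑ l, (cov μ C D * W) j l * D l ω)
    (fun j => (∫ ω', C j ω' ∂μ) - ∑ l, (cov μ C D * W) j l * ∫ ω', D l ω' ∂μ)
    hBMD hCND
  unfold adjCov
  rw [hfB, hfC, e1, e2,
    cov_sub_left hB hMD hCND,
    cov_sub_right hB hC hND,
    cov_sub_right hMD hC hND,
    cov_matmul_right (cov μ C D * W) hB hD,
    cov_matmul_left (cov μ B D * W) hD hC,
    cov_matmul_left (cov μ B D * W) hD hND,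
    cov_matmul_right (cov μ C D * W) hD hD]
  rw [show ((cov μ C D * W)ᵀ) = W * cov μ D C by rw [transpose_mul, hWs, cov_transpose]]
  have h4 : cov μ B D * (W * cov μ D C) = cov μ B D * W * cov μ D C :=
    (Matrix.mul_assoc _ _ _).symm
  have h5 : cov μ B D * W * (cov μ D D * (W * cov μ D C)) = cov μ B D * W * cov μ D C := by
    have h6 : cov μ B D * W * (cov μ D D * (W * cov μ D C))
        = cov μ B D * ((W * cov μ D D * W) * cov μ D C) := by simp only [Matrix.mul_assoc]
    rw [h6, hW.2.1, ← Matrix.mul_assoc]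
  rw [h4, h5]
  abel

end adjcov

/-- if `B_0, …, B_n` (`n ≥ 1`) form a path in a Bayes linear tree, i.e.
`Cov_{B_k}(B_0, B_{k+1}) = 0` for `1 ≤ k ≤ n−1`, then the belief transform propagates:
`T_{B_0}(B_n) = [P_{B_{n−1}}(B_n)·…·P_{B_1}(B_2)]·T_{B_0}(B_1)·[P_{B_2}(B_1)·…·P_{B_n}(B_{n−1})]`,
where `T_{B_0}(B_k) = P_{B_0}(B_k)·P_{B_k}(B_0) = Cov(B_k,B_0)·W_0·Cov(B_0,B_k)·W_k`. -/
theorem transf_propagates_along_path [MeasurableSpace Ω] (μ : Measure Ω)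
    [IsProbabilityMeasure μ] {d : ℕ → ℕ} (B : (k : ℕ) → Fin (d k) → Ω → ℝ)
    (hB : ∀ k i, Measurable (B k i) ∧ MemLp (B k i) 2 μ)
    (W : (k : ℕ) → Matrix (Fin (d k)) (Fin (d k)) ℝ)
    (hW : ∀ k, IsMoorePenrose (cov μ (B k) (B k)) (W k))
    (n : ℕ) (hn : 1 ≤ n)
    (hpath : ∀ k, 1 ≤ k → k ≤ n - 1 → adjCov μ (B 0) (B (k + 1)) (B k) (W k) = 0) :
    cov μ (B n) (B 0) * W 0 * (cov μ (B 0) (B n) * W n) =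
      fwdChain μ B W n * (cov μ (B 1) (B 0) * W 0 * (cov μ (B 0) (B 1) * W 1)) *
        revChain μ B W n := by
  have hm2 : ∀ k i, MemLp (B k i) 2 μ := fun k i => (hB k i).2
  have hWs : ∀ k, (W k)ᵀ = W k := fun k => mp_symm (cov_transpose _ _) (hW k)
  have key : ∀ k, 1 ≤ k → k ≤ n - 1 →
      cov μ (B 0) (B (k + 1)) = cov μ (B 0) (B k) * W k * cov μ (B k) (B (k + 1)) := by
    intro k h1 h2
    have h := hpath k h1 h2
    rw [adjCov_eq μ (B 0) (B (k + 1)) (B k) (hm2 0) (hm2 (k + 1)) (hm2 k) (W k) (hW k)] at h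
    exact sub_eq_zero.mp h
  have keyT : ∀ k, 1 ≤ k → k ≤ n - 1 →
      cov μ (B (k + 1)) (B 0) = cov μ (B (k + 1)) (B k) * W k * cov μ (B k) (B 0) := by
    intro k h1 h2
    have h := congrArg Matrix.transpose (key k h1 h2)
    simpa [transpose_mul, cov_transpose, hWs k, Matrix.mul_assoc] using h
  have frev : ∀ p : ℕ, p + 1 ≤ n →
      cov μ (B 0) (B (p + 1)) * W (p + 1)
        = cov μ (B 0) (B 1) * W 1 * revChain μ B W (p + 1) := by
    intro p
    induction p with
    | zero => intro _; simp [revChain]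
    | succ q ih =>
      intro hp
      have hk := key (q + 1) (by omega) (by omega)
      have hrc : revChain μ B W (q + 1 + 1)
          = revChain μ B W (q + 1) * (cov μ (B (q + 1)) (B (q + 2)) * W (q + 2)) := rfl
      rw [show q + 1 + 1 = q + 2 from rfl] at *
      rw [hk, hrc, ih (by omega)]
      simp only [Matrix.mul_assoc]
  have ffwd : ∀ p : ℕ, p + 1 ≤ n →
      cov μ (B (p + 1)) (B 0) = fwdChain μ B W (p + 1) * cov μ (B 1) (B 0) := by
    intro p
    induction p with
    | zero => intro _; simp [fwdChain]
    | succ q ih =>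
      intro hp
      have hk := keyT (q + 1) (by omega) (by omega)
      have hfc : fwdChain μ B W (q + 1 + 1)
          = (cov μ (B (q + 2)) (B (q + 1)) * W (q + 1)) * fwdChain μ B W (q + 1) := rfl
      rw [show q + 1 + 1 = q + 2 from rfl] at *
      rw [hk, hfc, ih (by omega)]
      simp only [Matrix.mul_assoc]
  obtain ⟨p, rfl⟩ : ∃ p, n = p + 1 := ⟨n - 1, by omega⟩
  rw [ffwd p le_rfl, frev p le_rfl]
  simp only [Matrix.mul_assoc]
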